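/- arXiv:1605.08558 — 2 statements merged into one kernel-verified Lean document; each statement's English description precedes it below -/
import Mathlib

section
/- Let ν be a Borel measure on ℝ₊^I \ {0} that is homogeneous of order -β (i.e., ν(tA) = t^(-β) ν(A) for all t > 0 and Borel sets A bounded away from 0), and let r₁, r₂ be continuous 1-homogeneous risk functionals strictly positive ν-almost everywhere. Then the angular measures σ_{r₁}(B) = ν{x : r₁(x) > 1, x/‖x‖ ∈ B} and σ_{r₂}(B) = ν{x : r₂(x) > 1, x/‖x‖ ∈ B} on the unit sphere satisfy σ_{r₁}(dw) = (r₁(w)/r₂(w))^β σ_{r₂}(dw), i.e., for every Borel B on the sphere, σ_{r₁}(B) = ∫_B (r₁(w)/r₂(w))^β σ_{r₂}(dw). -/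
open MeasureTheory Pointwise Filter Topology

private lemma risk_zero {I : ℕ} {r : (Fin I → ℝ) → ℝ}
    (h : ∀ (a : ℝ) (x : Fin I → ℝ), 0 < a → r (a • x) = a * r x) : r 0 = 0 := by
  have h2 := h 2 0 (by norm_num)
  rw [smul_zero] at h2
  linarith

private lemma ang_smul {I : ℕ} {a : ℝ} (x : Fin I → ℝ) (ha : 0 < a) :
    ‖a • x‖⁻¹ • (a • x) = ‖x‖⁻¹ • x := by
  have hne : a ≠ 0 := ha.ne'
  have h : a⁻¹ * ‖x‖⁻¹ * a = ‖x‖⁻¹ := by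
    rcases eq_or_ne ‖x‖ 0 with h0 | h0
    · simp [h0]
    · field_simp
  rw [norm_smul, Real.norm_eq_abs, abs_of_pos ha, mul_inv, smul_smul, h]

private lemma ang_measurable {I : ℕ} :
    Measurable (fun x : Fin I → ℝ => ‖x‖⁻¹ • x) :=
  (measurable_norm.inv).smul measurable_id

private lemma key_le {I : ℕ}
    (ν : Measure (Fin I → ℝ)) (β : ℝ) (hβ : 0 < β)
    (hν_hom : ∀ t : ℝ, 0 < t → ∀ A : Set (Fin I → ℝ), MeasurableSet A →
      ν (t • A) = ENNReal.ofReal (t ^ (-β)) * ν A)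
    (r₁ r₂ : (Fin I → ℝ) → ℝ)
    (hr₁_cont : Continuous r₁) (hr₂_cont : Continuous r₂)
    (hr₁_hom : ∀ (a : ℝ) (x : Fin I → ℝ), 0 < a → r₁ (a • x) = a * r₁ x)
    (hr₂_hom : ∀ (a : ℝ) (x : Fin I → ℝ), 0 < a → r₂ (a • x) = a * r₂ x)
    (hr₁_pos : ∀ᵐ x ∂ν, 0 < r₁ x) (hr₂_pos : ∀ᵐ x ∂ν, 0 < r₂ x)
    (σ₁ σ₂ : Measure (Fin I → ℝ))
    (hσ₁ : ∀ B : Set (Fin I → ℝ), MeasurableSet B →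
      σ₁ B = ν {x | 1 < r₁ x ∧ ‖x‖⁻¹ • x ∈ B})
    (hσ₂ : ∀ B : Set (Fin I → ℝ), MeasurableSet B →
      σ₂ B = ν {x | 1 < r₂ x ∧ ‖x‖⁻¹ • x ∈ B})
    (B : Set (Fin I → ℝ)) (hB : MeasurableSet B) :
    σ₁ B ≤ ∫⁻ w in B, ENNReal.ofReal ((r₁ w / r₂ w) ^ β) ∂σ₂ := by
  have hr₁m := hr₁_cont.measurable
  have hr₂m := hr₂_cont.measurable
  have hangm : Measurable (fun x : Fin I → ℝ => ‖x‖⁻¹ • x) := ang_measurable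
  have h10 : r₁ 0 = 0 := risk_zero hr₁_hom
  have hfm : Measurable (fun w => ENNReal.ofReal ((r₁ w / r₂ w) ^ β)) :=
    ((hr₁m.div hr₂m).pow measurable_const).ennreal_ofReal
  set G : Set (Fin I → ℝ) := {w | 0 < r₁ w ∧ 0 < r₂ w} with hGdef
  have hGm : MeasurableSet G :=
    (measurableSet_lt measurable_const hr₁m).inter (measurableSet_lt measurable_const hr₂m)
  have haeG : ∀ᵐ x ∂ν, ‖x‖⁻¹ • x ∈ G := by
    filter_upwards [hr₁_pos, hr₂_pos] with x h1 h2
    have hx0 : x ≠ 0 := by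
      rintro rfl
      rw [h10] at h1
      exact lt_irrefl 0 h1
    have hn : 0 < ‖x‖ := norm_pos_iff.mpr hx0
    have hni : 0 < ‖x‖⁻¹ := inv_pos.mpr hn
    exact ⟨by rw [hr₁_hom _ _ hni]; positivity, by rw [hr₂_hom _ _ hni]; positivity⟩
  have hnullG : ν {x | ‖x‖⁻¹ • x ∉ G} = 0 := haeG
  -- scaling relation
  have hAm : ∀ E : Set (Fin I → ℝ), MeasurableSet E →
      MeasurableSet {x | 1 < r₂ x ∧ ‖x‖⁻¹ • x ∈ E} := fun E hE =>
    (measurableSet_lt measurable_const hr₂m).inter (hangm hE)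
  have hscale : ∀ s : ℝ, 0 < s → ∀ E : Set (Fin I → ℝ), MeasurableSet E →
      ν {x | s < r₂ x ∧ ‖x‖⁻¹ • x ∈ E}
        = ENNReal.ofReal (s ^ (-β)) * ν {x | 1 < r₂ x ∧ ‖x‖⁻¹ • x ∈ E} := by
    intro s hs E hE
    have hset : {x | s < r₂ x ∧ ‖x‖⁻¹ • x ∈ E} = s • {x | 1 < r₂ x ∧ ‖x‖⁻¹ • x ∈ E} := by
      ext x
      constructor
      · rintro ⟨h1, h2⟩
        refine ⟨s⁻¹ • x, ⟨?_, ?_⟩, smul_inv_smul₀ hs.ne' x⟩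
        · rw [hr₂_hom _ _ (inv_pos.mpr hs)]
          have hh := mul_lt_mul_of_pos_left h1 (inv_pos.mpr hs)
          rw [inv_mul_cancel₀ hs.ne'] at hh
          exact hh
        · rw [ang_smul x (inv_pos.mpr hs)]; exact h2
      · rintro ⟨y, ⟨h1, h2⟩, rfl⟩
        constructor
        · rw [hr₂_hom _ _ hs]; nlinarith
        · rw [ang_smul y hs]; exact h2
    rw [hset, hν_hom s hs _ (hAm E hE)]
  -- bound for a fixed grid ratio c > 1
  have hcb : ∀ c : ℝ, 1 < c →
      σ₁ B ≤ ENNReal.ofReal (c ^ β) * ∫⁻ w in B, ENNReal.ofReal ((r₁ w / r₂ w) ^ β) ∂σ₂ := by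
    intro c hc
    have hc0 : (0:ℝ) < c := lt_trans one_pos hc
    set Bk : ℤ → Set (Fin I → ℝ) := fun k =>
      (B ∩ G) ∩ {w | c ^ (k:ℝ) < r₁ w / r₂ w ∧ r₁ w / r₂ w ≤ c ^ ((k:ℝ)+1)} with hBkdef
    have hBkm : ∀ k, MeasurableSet (Bk k) := fun k =>
      (hB.inter hGm).inter ((measurableSet_lt measurable_const (hr₁m.div hr₂m)).inter
        (measurableSet_le (hr₁m.div hr₂m) measurable_const))
    have hcover : ⋃ k, Bk k = B ∩ G := by
      apply Set.Subset.antisymm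
      · exact Set.iUnion_subset fun k => Set.inter_subset_left
      · intro w hw
        have hrat : 0 < r₁ w / r₂ w := div_pos hw.2.1 hw.2.2
        obtain ⟨k, hk1, hk2⟩ := exists_mem_Ioc_zpow hrat hc
        refine Set.mem_iUnion.mpr ⟨k, hw, ?_, ?_⟩
        · rw [Real.rpow_intCast]; exact hk1
        · rw [show ((k:ℝ)+1) = ((k+1 : ℤ) : ℝ) by push_cast; ring, Real.rpow_intCast]
          exact hk2
    have hdisj : Pairwise (Function.onFun Disjoint Bk) := by
      have key : ∀ k l : ℤ, k < l → Disjoint (Bk k) (Bk l) := by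
        intro k l h
        rw [Set.disjoint_left]
        rintro w ⟨_, _, hw2⟩ ⟨_, hw3, _⟩
        have h1 : ((k:ℝ)+1) ≤ (l:ℝ) := by exact_mod_cast h
        have h2 : c ^ ((k:ℝ)+1) ≤ c ^ (l:ℝ) :=
          Real.rpow_le_rpow_of_exponent_le hc.le h1
        linarith
      intro k l hkl
      rcases hkl.lt_or_gt with h | h
      · exact key k l h
      · exact (key l k h).symm
    -- per-piece bound
    have hk_bound : ∀ k : ℤ, σ₁ (Bk k) ≤ ENNReal.ofReal (c ^ β) *
        ∫⁻ w in Bk k, ENNReal.ofReal ((r₁ w / r₂ w) ^ β) ∂σ₂ := by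
      intro k
      have hca : 0 < c ^ ((k:ℝ)+1) := Real.rpow_pos_of_pos hc0 _
      have hsub : {x | 1 < r₁ x ∧ ‖x‖⁻¹ • x ∈ Bk k} ⊆
          {x | c ^ (-((k:ℝ)+1)) < r₂ x ∧ ‖x‖⁻¹ • x ∈ Bk k} := by
        rintro x ⟨hx1, hx2⟩
        have hGx : ‖x‖⁻¹ • x ∈ G := hx2.1.2
        have hx0 : x ≠ 0 := by
          rintro rfl
          rw [smul_zero] at hGx
          rw [hGdef] at hGx
          have := hGx.1
          rw [h10] at this
          exact lt_irrefl 0 this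
        have hn : 0 < ‖x‖ := norm_pos_iff.mpr hx0
        have hni : 0 < ‖x‖⁻¹ := inv_pos.mpr hn
        have hr2pos : 0 < r₂ x := by
          have h2 := hGx.2
          rw [hr₂_hom _ _ hni] at h2
          nlinarith
        have hrat : r₁ x / r₂ x ≤ c ^ ((k:ℝ)+1) := by
          have h2 := hx2.2.2
          have heq : r₁ (‖x‖⁻¹ • x) / r₂ (‖x‖⁻¹ • x) = r₁ x / r₂ x := by
            rw [hr₁_hom _ _ hni, hr₂_hom _ _ hni, mul_div_mul_left _ _ (ne_of_gt hni)]
          rwa [heq] at h2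
        refine ⟨?_, hx2⟩
        have hr1le : r₁ x ≤ c ^ ((k:ℝ)+1) * r₂ x := by
          rwa [div_le_iff₀ hr2pos] at hrat
        rw [Real.rpow_neg hc0.le]
        have hlt : 1 < c ^ ((k:ℝ)+1) * r₂ x := lt_of_lt_of_le hx1 hr1le
        have h3 : (c ^ ((k:ℝ)+1))⁻¹ * (c ^ ((k:ℝ)+1) * r₂ x) = r₂ x := by
          field_simp
        nlinarith [mul_lt_mul_of_pos_left hlt (inv_pos.mpr hca)]
      have hlow : ENNReal.ofReal (c ^ ((k:ℝ) * β)) * σ₂ (Bk k) ≤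
          ∫⁻ w in Bk k, ENNReal.ofReal ((r₁ w / r₂ w) ^ β) ∂σ₂ := by
        have hpt : ∀ w ∈ Bk k,
            ENNReal.ofReal (c ^ ((k:ℝ)*β)) ≤ ENNReal.ofReal ((r₁ w / r₂ w) ^ β) := by
          intro w hw
          apply ENNReal.ofReal_le_ofReal
          rw [Real.rpow_mul hc0.le]
          exact Real.rpow_le_rpow (Real.rpow_pos_of_pos hc0 _).le hw.2.1.le hβ.le
        calc ENNReal.ofReal (c ^ ((k:ℝ)*β)) * σ₂ (Bk k)
            = ∫⁻ _ in Bk k, ENNReal.ofReal (c ^ ((k:ℝ)*β)) ∂σ₂ := (setLIntegral_const _ _).symm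
          _ ≤ _ := setLIntegral_mono hfm hpt
      calc σ₁ (Bk k) = ν {x | 1 < r₁ x ∧ ‖x‖⁻¹ • x ∈ Bk k} := hσ₁ _ (hBkm k)
        _ ≤ ν {x | c ^ (-((k:ℝ)+1)) < r₂ x ∧ ‖x‖⁻¹ • x ∈ Bk k} := measure_mono hsub
        _ = ENNReal.ofReal ((c ^ (-((k:ℝ)+1))) ^ (-β)) * σ₂ (Bk k) := by
            rw [hscale _ (Real.rpow_pos_of_pos hc0 _) _ (hBkm k), hσ₂ _ (hBkm k)]
        _ = ENNReal.ofReal (c ^ β) * (ENNReal.ofReal (c ^ ((k:ℝ) * β)) * σ₂ (Bk k)) := by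
            have hexp : (c ^ (-((k:ℝ)+1))) ^ (-β) = c ^ β * c ^ ((k:ℝ)*β) := by
              rw [← Real.rpow_mul hc0.le, ← Real.rpow_add hc0,
                show (-((k:ℝ)+1)) * (-β) = β + (k:ℝ)*β from by ring]
            rw [hexp, ENNReal.ofReal_mul (Real.rpow_nonneg hc0.le β), mul_assoc]
        _ ≤ ENNReal.ofReal (c ^ β) *
            ∫⁻ w in Bk k, ENNReal.ofReal ((r₁ w / r₂ w) ^ β) ∂σ₂ := mul_le_mul_right hlow _
    -- assemble
    have hsplit : σ₁ B = σ₁ (B ∩ G) := by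
      have h0 : σ₁ (B \ G) = 0 := by
        rw [hσ₁ _ (hB.diff hGm)]
        refine measure_mono_null ?_ hnullG
        intro x hx
        exact hx.2.2
      calc σ₁ B = σ₁ (B ∩ G) + σ₁ (B \ G) := (measure_inter_add_diff B hGm).symm
        _ = σ₁ (B ∩ G) := by rw [h0, add_zero]
    calc σ₁ B = σ₁ (⋃ k, Bk k) := by rw [hsplit, hcover]
      _ = ∑' k, σ₁ (Bk k) := measure_iUnion hdisj hBkm
      _ ≤ ∑' k, ENNReal.ofReal (c ^ β) *
            ∫⁻ w in Bk k, ENNReal.ofReal ((r₁ w / r₂ w) ^ β) ∂σ₂ :=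
          ENNReal.tsum_le_tsum hk_bound
      _ = ENNReal.ofReal (c ^ β) *
            ∑' k, ∫⁻ w in Bk k, ENNReal.ofReal ((r₁ w / r₂ w) ^ β) ∂σ₂ :=
          ENNReal.tsum_mul_left
      _ = ENNReal.ofReal (c ^ β) *
            ∫⁻ w in ⋃ k, Bk k, ENNReal.ofReal ((r₁ w / r₂ w) ^ β) ∂σ₂ := by
          rw [lintegral_iUnion hBkm hdisj]
      _ ≤ ENNReal.ofReal (c ^ β) *
            ∫⁻ w in B, ENNReal.ofReal ((r₁ w / r₂ w) ^ β) ∂σ₂ := by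
          apply mul_le_mul_right
          rw [hcover]
          exact lintegral_mono' (Measure.restrict_mono Set.inter_subset_left le_rfl) le_rfl
  -- limit c → 1
  set J := ∫⁻ w in B, ENNReal.ofReal ((r₁ w / r₂ w) ^ β) ∂σ₂ with hJ
  rcases eq_or_ne J ⊤ with hJt | hJt
  · rw [hJt]; exact le_top
  · have h1 : Tendsto (fun n : ℕ => (1 + 1/((n:ℝ)+1))) atTop (𝓝 1) := by
      have h0 := tendsto_one_div_add_atTop_nhds_zero_nat (𝕜 := ℝ)
      have h0' := h0.const_add (1:ℝ)
      simpa using h0'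
    have hcontat : ContinuousAt (fun x : ℝ => ENNReal.ofReal (x ^ β)) 1 :=
      ENNReal.continuous_ofReal.continuousAt.comp
        (Real.continuousAt_rpow_const 1 β (Or.inl one_ne_zero))
    have h2 : Tendsto (fun n : ℕ => ENNReal.ofReal ((1 + 1/((n:ℝ)+1)) ^ β)) atTop
        (𝓝 (ENNReal.ofReal ((1:ℝ) ^ β))) := hcontat.tendsto.comp h1
    have hseq : Tendsto (fun n : ℕ => ENNReal.ofReal ((1 + 1/((n:ℝ)+1)) ^ β) * J) atTop
        (𝓝 (ENNReal.ofReal ((1:ℝ) ^ β) * J)) := ENNReal.Tendsto.mul_const h2 (Or.inr hJt)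
    have hle' : ∀ n : ℕ, σ₁ B ≤ ENNReal.ofReal ((1 + 1/((n:ℝ)+1)) ^ β) * J := by
      intro n
      apply hcb
      have : (0:ℝ) < 1/((n:ℝ)+1) := by positivity
      linarith
    have := ge_of_tendsto' hseq hle'
    simpa using this

/-- Relation between the angular measures of two risk functionals for a
(-β)-homogeneous limit measure ν : σ_{r₁}(dw) = (r₁(w)/r₂(w))^β σ_{r₂}(dw). -/
theorem angular_measure_change_of_risk {I : ℕ}
    (ν : Measure (Fin I → ℝ)) (β : ℝ) (hβ : 0 < β)
    (hν_hom : ∀ t : ℝ, 0 < t → ∀ A : Set (Fin I → ℝ), MeasurableSet A →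
      ν (t • A) = ENNReal.ofReal (t ^ (-β)) * ν A)
    (hν_orthant : ∀ᵐ x ∂ν, ∀ i, 0 ≤ x i)
    (r₁ r₂ : (Fin I → ℝ) → ℝ)
    (hr₁_cont : Continuous r₁) (hr₂_cont : Continuous r₂)
    (hr₁_hom : ∀ (a : ℝ) (x : Fin I → ℝ), 0 < a → r₁ (a • x) = a * r₁ x)
    (hr₂_hom : ∀ (a : ℝ) (x : Fin I → ℝ), 0 < a → r₂ (a • x) = a * r₂ x)
    (hr₁_pos : ∀ᵐ x ∂ν, 0 < r₁ x) (hr₂_pos : ∀ᵐ x ∂ν, 0 < r₂ x)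
    (σ₁ σ₂ : Measure (Fin I → ℝ))
    (hσ₁ : ∀ B : Set (Fin I → ℝ), MeasurableSet B →
      σ₁ B = ν {x | 1 < r₁ x ∧ ‖x‖⁻¹ • x ∈ B})
    (hσ₂ : ∀ B : Set (Fin I → ℝ), MeasurableSet B →
      σ₂ B = ν {x | 1 < r₂ x ∧ ‖x‖⁻¹ • x ∈ B}) :
    ∀ B : Set (Fin I → ℝ), MeasurableSet B →
      σ₁ B = ∫⁻ w in B, ENNReal.ofReal ((r₁ w / r₂ w) ^ β) ∂σ₂ := by
  intro B hB
  have hr₁m := hr₁_cont.measurable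
  have hr₂m := hr₂_cont.measurable
  have h10 : r₁ 0 = 0 := risk_zero hr₁_hom
  have h20 : r₂ 0 = 0 := risk_zero hr₂_hom
  have key12 := key_le ν β hβ hν_hom r₁ r₂ hr₁_cont hr₂_cont hr₁_hom hr₂_hom
    hr₁_pos hr₂_pos σ₁ σ₂ hσ₁ hσ₂
  have key21 := key_le ν β hβ hν_hom r₂ r₁ hr₂_cont hr₁_cont hr₂_hom hr₁_hom
    hr₂_pos hr₁_pos σ₂ σ₁ hσ₂ hσ₁
  refine le_antisymm (key12 B hB) ?_
  -- the reverse inequality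
  set f : (Fin I → ℝ) → ENNReal := fun w => ENNReal.ofReal ((r₁ w / r₂ w) ^ β) with hf
  set g : (Fin I → ℝ) → ENNReal := fun w => ENNReal.ofReal ((r₂ w / r₁ w) ^ β) with hg
  have hfm : Measurable f := ((hr₁m.div hr₂m).pow measurable_const).ennreal_ofReal
  have hgm : Measurable g := ((hr₂m.div hr₁m).pow measurable_const).ennreal_ofReal
  have hle : σ₂ ≤ σ₁.withDensity g := by
    refine Measure.le_iff.mpr fun s hs => ?_
    rw [withDensity_apply _ hs]
    exact key21 s hs
  -- σ₁-a.e. positivity of r₁ and r₂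
  set G : Set (Fin I → ℝ) := {w | 0 < r₁ w ∧ 0 < r₂ w} with hGdef
  have hGm : MeasurableSet G :=
    (measurableSet_lt measurable_const hr₁m).inter (measurableSet_lt measurable_const hr₂m)
  have haeG : ∀ᵐ x ∂ν, ‖x‖⁻¹ • x ∈ G := by
    filter_upwards [hr₁_pos, hr₂_pos] with x h1 h2
    have hx0 : x ≠ 0 := by
      rintro rfl
      rw [h10] at h1
      exact lt_irrefl 0 h1
    have hn : 0 < ‖x‖ := norm_pos_iff.mpr hx0
    have hni : 0 < ‖x‖⁻¹ := inv_pos.mpr hn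
    exact ⟨by rw [hr₁_hom _ _ hni]; positivity, by rw [hr₂_hom _ _ hni]; positivity⟩
  have hnullG : ν {x | ‖x‖⁻¹ • x ∉ G} = 0 := haeG
  have haeσ₁ : ∀ᵐ w ∂σ₁, w ∈ G := by
    rw [ae_iff]
    have : σ₁ {w | w ∉ G} = 0 := by
      rw [show {w | w ∉ G} = Gᶜ from rfl, hσ₁ _ hGm.compl]
      refine measure_mono_null ?_ hnullG
      intro x hx
      exact hx.2
    exact this
  have hprod : ∀ᵐ w ∂σ₁, g w * f w = 1 := by
    filter_upwards [haeσ₁] with w hw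
    have h1 : 0 < r₁ w := hw.1
    have h2 : 0 < r₂ w := hw.2
    rw [hf, hg]
    rw [← ENNReal.ofReal_mul (Real.rpow_nonneg (div_nonneg h2.le h1.le) β),
      ← Real.mul_rpow (div_nonneg h2.le h1.le) (div_nonneg h1.le h2.le)]
    have : r₂ w / r₁ w * (r₁ w / r₂ w) = 1 := by
      field_simp
    rw [this, Real.one_rpow, ENNReal.ofReal_one]
  calc ∫⁻ w in B, f w ∂σ₂
      ≤ ∫⁻ w in B, f w ∂(σ₁.withDensity g) :=
        lintegral_mono' (Measure.restrict_mono subset_rfl hle) le_rfl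
    _ = ∫⁻ w in B, g w * f w ∂σ₁ := by
        rw [restrict_withDensity hB, lintegral_withDensity_eq_lintegral_mul _ hgm hfm]
        rfl
    _ = ∫⁻ _ in B, 1 ∂σ₁ := lintegral_congr_ae (ae_restrict_of_ae hprod)
    _ = σ₁ B := by rw [setLIntegral_one]
end

section
/- Let ν be a Borel measure on ℝ₊^I \ {0} homogeneous of order -1 and let r be a 1-homogeneous measurable functional with 0 < ν{x : r(x) > 1} < ∞. Then under ν, conditioned on {r(x) > 1}, the radius r(x) and the angle x/‖x‖ are independent, with r(x) distributed Pareto(1): ν{x : r(x) > ρ, x/‖x‖ ∈ B} = ρ⁻¹ · ν{x : r(x) > 1, x/‖x‖ ∈ B} for all ρ ≥ 1 and Borel B on the unit sphere. -/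
open MeasureTheory Pointwise

/-- Pseudo-polar factorization of a (-1)-homogeneous measure: conditioned on
{r(x) > 1}, the radius r(x) is Pareto(1) and independent of the angle x/‖x‖. -/
theorem radius_angle_factorization {I : ℕ}
    (ν : Measure (Fin I → ℝ))
    (hν_hom : ∀ t : ℝ, 0 < t → ∀ A : Set (Fin I → ℝ), MeasurableSet A →
      ν (t • A) = ENNReal.ofReal t⁻¹ * ν A)
    (hν_orthant : ∀ᵐ x ∂ν, ∀ i, 0 ≤ x i)
    (r : (Fin I → ℝ) → ℝ) (hr_meas : Measurable r)
    (hr_hom : ∀ (a : ℝ) (x : Fin I → ℝ), 0 < a → r (a • x) = a * r x)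
    (h_fin : ν {x | 1 < r x} < ⊤) (h_pos : 0 < ν {x | 1 < r x}) :
    ∀ ρ : ℝ, 1 ≤ ρ → ∀ B : Set (Fin I → ℝ), MeasurableSet B →
      ν {x | ρ < r x ∧ ‖x‖⁻¹ • x ∈ B} =
        ENNReal.ofReal ρ⁻¹ * ν {x | 1 < r x ∧ ‖x‖⁻¹ • x ∈ B} := by
  intro ρ hρ B hB
  have hρ0 : (0:ℝ) < ρ := lt_of_lt_of_le one_pos hρ
  have hr0 : r 0 = 0 := by
    have h2 := hr_hom 2 0 (by norm_num)
    rw [smul_zero] at h2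
    linarith
  have hmeas : MeasurableSet {x : Fin I → ℝ | 1 < r x ∧ ‖x‖⁻¹ • x ∈ B} := by
    apply MeasurableSet.inter
    · exact measurableSet_lt measurable_const hr_meas
    · exact ((measurable_norm.inv.smul measurable_id) hB)
  have hset : {x : Fin I → ℝ | ρ < r x ∧ ‖x‖⁻¹ • x ∈ B} =
      ρ • {x : Fin I → ℝ | 1 < r x ∧ ‖x‖⁻¹ • x ∈ B} := by
    ext x
    rw [Set.mem_smul_set_iff_inv_smul_mem₀ (ne_of_gt hρ0)]
    simp only [Set.mem_setOf_eq]
    have hrinv : r (ρ⁻¹ • x) = ρ⁻¹ * r x := hr_hom ρ⁻¹ x (inv_pos.mpr hρ0)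
    constructor
    · rintro ⟨h1, h2⟩
      have hx0 : x ≠ 0 := by
        rintro rfl; rw [hr0] at h1; linarith
      have hnx : ‖x‖ ≠ 0 := norm_ne_zero_iff.mpr hx0
      constructor
      · rw [hrinv]; rw [lt_inv_mul_iff₀ hρ0]; simpa using h1
      · have : ‖ρ⁻¹ • x‖⁻¹ • (ρ⁻¹ • x) = ‖x‖⁻¹ • x := by
          rw [norm_smul, smul_smul]
          rw [Real.norm_eq_abs, abs_of_pos (inv_pos.mpr hρ0)]
          congr 1
          field_simp
        rw [this]; exact h2
    · rintro ⟨h1, h2⟩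
      rw [hrinv] at h1
      have hx0 : x ≠ 0 := by
        rintro rfl; rw [hr0, mul_zero] at h1; linarith
      have hnx : ‖x‖ ≠ 0 := norm_ne_zero_iff.mpr hx0
      constructor
      · rw [lt_inv_mul_iff₀ hρ0] at h1; simpa using h1
      · have : ‖ρ⁻¹ • x‖⁻¹ • (ρ⁻¹ • x) = ‖x‖⁻¹ • x := by
          rw [norm_smul, smul_smul]
          rw [Real.norm_eq_abs, abs_of_pos (inv_pos.mpr hρ0)]
          congr 1
          field_simp
        rw [this] at h2; exact h2
  rw [hset, hν_hom ρ hρ0 _ hmeas]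
end
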